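/- Landau–Toeplitz Theorem for the slice 3-diameter (inequality part): Let f(q) = ∑_{n≥0} q^n a_n be a slice regular function on 𝔹 such that d̂₃(f(𝔹)) = d₃(𝔹) = √3. Then d̂₃(f(r𝔹)) ≤ √3·r for every r ∈ (0,1), and |a₁| ≤ 1 (i.e. |∂_c f(0)| ≤ 1). -/

import Mathlib

noncomputable section

open Filter Metric Set

local notation "ℍ" => Quaternion ℝ

/-- The slice (complex plane) `L_I = ℝ + ℝI` through an imaginary unit `I`. -/
def sliceL (I : ℍ) : Set ℍ := {z : ℍ | ∃ x y : ℝ, z = (x : ℍ) + y • I}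

open Classical in
/-- The normalized coefficients `b_n = a_n a_N⁻¹ |a_N|`, where `a_N` is the first
nonvanishing coefficient (and `b ≡ 0` if all coefficients vanish). -/
def bseq (a : ℕ → ℍ) : ℕ → ℍ :=
  if h : ∃ N, a N ≠ 0 then
    fun n => a n * (a (Nat.find h))⁻¹ * ((‖a (Nat.find h)‖ : ℝ) : ℍ)
  else fun _ => 0

/-- The `n`-th power series coefficient of
`ĝ_{w₁,w₂,w₃}(z) = ∑ zⁿ ∑_{k=0}^n ∑_{j=0}^k (w₂ʲ−w₁ʲ)(w₃^{k−j}−w₁^{k−j})(w₃^{n−k}−w₂^{n−k}) b_j b_{k−j} b_{n−k}`. -/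
def ghatCoeff (b : ℕ → ℍ) (w₁ w₂ w₃ : ℍ) (n : ℕ) : ℍ :=
  ∑ k ∈ Finset.range (n + 1), ∑ j ∈ Finset.range (k + 1),
    (w₂ ^ j - w₁ ^ j) * (w₃ ^ (k - j) - w₁ ^ (k - j)) * (w₃ ^ (n - k) - w₂ ^ (n - k)) *
      (b j * b (k - j) * b (n - k))

/-- The slice `3`-diameter
`d̂₃(f(r𝔹)) = sup_{I∈𝕊} max_{w₁,w₂,w₃ ∈ 𝔹̄_I} max_{z ∈ L_I, |z| ≤ r} |ĝ_{w₁,w₂,w₃}(z)|^{1/3}`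
(for constant `f` all the values `ĝ_{w₁,w₂,w₃}(z)` vanish, so `d̂₃(f(r𝔹)) = 0`). -/
def sliceD3 (a : ℕ → ℍ) (r : ℝ) : ℝ :=
  sSup {x : ℝ | ∃ I w₁ w₂ w₃ z : ℍ, I ^ 2 = -1 ∧
    w₁ ∈ sliceL I ∧ ‖w₁‖ ≤ 1 ∧ w₂ ∈ sliceL I ∧ ‖w₂‖ ≤ 1 ∧ w₃ ∈ sliceL I ∧ ‖w₃‖ ≤ 1 ∧
    z ∈ sliceL I ∧ ‖z‖ ≤ r ∧
    x = ‖∑' n : ℕ, z ^ n * ghatCoeff (bseq a) w₁ w₂ w₃ n‖ ^ ((1 : ℝ) / 3)}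



lemma unit_facts (I : ℍ) (hI : I ^ 2 = -1) :
    I.re = 0 ∧ I.imI ^ 2 + I.imJ ^ 2 + I.imK ^ 2 = 1 := by
  rw [sq, Quaternion.ext_iff] at hI
  obtain ⟨h1, h2, h3, h4⟩ := hI
  simp only [Quaternion.re_mul, Quaternion.imI_mul, Quaternion.imJ_mul, Quaternion.imK_mul,
    Quaternion.re_neg, Quaternion.imI_neg, Quaternion.imJ_neg, Quaternion.imK_neg,
    Quaternion.re_one, Quaternion.imI_one, Quaternion.imJ_one, Quaternion.imK_one,
    neg_zero] at h1 h2 h3 h4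
  have hre : I.re = 0 := by
    nlinarith [sq_nonneg I.re, sq_nonneg I.imI, sq_nonneg I.imJ, sq_nonneg I.imK,
      sq_nonneg (I.re * I.imI), sq_nonneg (I.re * I.imJ), sq_nonneg (I.re * I.imK)]
  exact ⟨hre, by nlinarith⟩

lemma norm_slice_pt (I : ℍ) (hI : I ^ 2 = -1) (x y : ℝ) :
    ‖(x : ℍ) + y • I‖ = Real.sqrt (x ^ 2 + y ^ 2) := by
  obtain ⟨h1, h2⟩ := unit_facts I hI
  have hns : Quaternion.normSq ((x : ℍ) + y • I) = x ^ 2 + y ^ 2 := by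
    rw [Quaternion.normSq_def']
    simp only [Quaternion.re_add, Quaternion.imI_add, Quaternion.imJ_add, Quaternion.imK_add,
      Quaternion.re_coe, Quaternion.imI_coe, Quaternion.imJ_coe, Quaternion.imK_coe,
      Quaternion.re_smul, Quaternion.imI_smul, Quaternion.imJ_smul, Quaternion.imK_smul,
      smul_eq_mul, h1, mul_zero, add_zero, zero_add]
    nlinarith [h2]
  have h3 := Quaternion.normSq_eq_norm_mul_self ((x : ℍ) + y • I)
  rw [hns] at h3
  rw [show ‖(x : ℍ) + y • I‖ = Real.sqrt (‖(x : ℍ) + y • I‖ * ‖(x : ℍ) + y • I‖) from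
    (Real.sqrt_mul_self (norm_nonneg _)).symm, ← h3]


lemma phi_apply (I : ℍ) (hI : I * I = -1) (w : ℂ) :
    Complex.liftAux I hI w = (w.re : ℍ) + w.im • I := by
  rw [Complex.liftAux_apply, Quaternion.algebraMap_def]

lemma norm_phi (I : ℍ) (hI : I ^ 2 = -1) (hI' : I * I = -1) (w : ℂ) :
    ‖Complex.liftAux I hI' w‖ = ‖w‖ := by
  rw [phi_apply, norm_slice_pt I hI, Complex.norm_def, Complex.normSq_apply]
  ring_nf

lemma mem_sliceL_iff (I : ℍ) (hI' : I * I = -1) (z : ℍ) :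
    z ∈ sliceL I ↔ ∃ w : ℂ, z = Complex.liftAux I hI' w := by
  constructor
  · rintro ⟨x, y, rfl⟩
    exact ⟨⟨x, y⟩, by rw [phi_apply]⟩
  · rintro ⟨w, rfl⟩
    exact ⟨w.re, w.im, by rw [phi_apply]⟩

lemma norm_bseq_eq (a : ℕ → ℍ) (h : ∃ N, a N ≠ 0) (n : ℕ) : ‖bseq a n‖ = ‖a n‖ := by
  classical
  rw [bseq, dif_pos h]
  have hN : a (Nat.find h) ≠ 0 := Nat.find_spec h
  have hN' : ‖a (Nat.find h)‖ ≠ 0 := norm_ne_zero_iff.2 hN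
  rw [norm_mul, norm_mul, norm_inv, Quaternion.norm_coe, Real.norm_eq_abs,
    abs_of_nonneg (norm_nonneg _)]
  field_simp

lemma norm_bseq_le (a : ℕ → ℍ) (n : ℕ) : ‖bseq a n‖ ≤ ‖a n‖ := by
  classical
  by_cases h : ∃ N, a N ≠ 0
  · rw [norm_bseq_eq a h n]
  · rw [bseq, dif_neg h]
    simp

lemma ghatCoeff_zero (b : ℕ → ℍ) (w₁ w₂ w₃ : ℍ) (n : ℕ) (hn : n < 3) :
    ghatCoeff b w₁ w₂ w₃ n = 0 := by
  interval_cases n <;>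
    simp [ghatCoeff, Finset.sum_range_succ, Finset.sum_range_one, sub_self]

lemma ghatCoeff_bound (b : ℕ → ℍ) (w₁ w₂ w₃ : ℍ)
    (h₁ : ‖w₁‖ ≤ 1) (h₂ : ‖w₂‖ ≤ 1) (h₃ : ‖w₃‖ ≤ 1)
    (ρ₀ M : ℝ) (hρ₀ : 0 ≤ ρ₀) (hM : ∀ m : ℕ, ‖b m‖ * ρ₀ ^ m ≤ M) (n : ℕ) :
    ‖ghatCoeff b w₁ w₂ w₃ n‖ * ρ₀ ^ n ≤ 8 * M ^ 3 * ((n : ℝ) + 1) ^ 2 := by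
  have hM0 : 0 ≤ M := le_trans (by positivity) (hM 0)
  have hdiff : ∀ (u v : ℍ) (m : ℕ), ‖u‖ ≤ 1 → ‖v‖ ≤ 1 → ‖u ^ m - v ^ m‖ ≤ 2 := by
    intro u v m hu hv
    calc ‖u ^ m - v ^ m‖ ≤ ‖u ^ m‖ + ‖v ^ m‖ := norm_sub_le _ _
      _ ≤ 1 + 1 := by
          rw [norm_pow, norm_pow]
          exact add_le_add (pow_le_one₀ (norm_nonneg _) hu) (pow_le_one₀ (norm_nonneg _) hv)
      _ = 2 := by norm_num
  have hterm : ∀ k ∈ Finset.range (n + 1), ∀ j ∈ Finset.range (k + 1),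
      ‖(w₂ ^ j - w₁ ^ j) * (w₃ ^ (k - j) - w₁ ^ (k - j)) * (w₃ ^ (n - k) - w₂ ^ (n - k)) *
        (b j * b (k - j) * b (n - k))‖ * ρ₀ ^ n ≤ 8 * M ^ 3 := by
    intro k hk j hj
    rw [Finset.mem_range, Nat.lt_succ_iff] at hk hj
    have hsplit : ρ₀ ^ n = ρ₀ ^ j * ρ₀ ^ (k - j) * ρ₀ ^ (n - k) := by
      rw [← pow_add, ← pow_add]
      congr 1
      omega
    rw [norm_mul, norm_mul, norm_mul, norm_mul, norm_mul, hsplit]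
    calc ‖w₂ ^ j - w₁ ^ j‖ * ‖w₃ ^ (k - j) - w₁ ^ (k - j)‖ * ‖w₃ ^ (n - k) - w₂ ^ (n - k)‖ *
          (‖b j‖ * ‖b (k - j)‖ * ‖b (n - k)‖) * (ρ₀ ^ j * ρ₀ ^ (k - j) * ρ₀ ^ (n - k))
        = (‖w₂ ^ j - w₁ ^ j‖ * ‖w₃ ^ (k - j) - w₁ ^ (k - j)‖ * ‖w₃ ^ (n - k) - w₂ ^ (n - k)‖) *
          ((‖b j‖ * ρ₀ ^ j) * (‖b (k - j)‖ * ρ₀ ^ (k - j)) * (‖b (n - k)‖ * ρ₀ ^ (n - k))) := by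
          ring
      _ ≤ (2 * 2 * 2) * (M * M * M) := by
          apply mul_le_mul
          · exact mul_le_mul (mul_le_mul (hdiff _ _ _ h₂ h₁) (hdiff _ _ _ h₃ h₁)
              (norm_nonneg _) (by norm_num)) (hdiff _ _ _ h₃ h₂) (norm_nonneg _) (by norm_num)
          · exact mul_le_mul (mul_le_mul (hM j) (hM (k - j)) (by positivity) hM0)
              (hM (n - k)) (by positivity) (by positivity)
          · positivity
          · positivity
      _ = 8 * M ^ 3 := by ring
  calc ‖ghatCoeff b w₁ w₂ w₃ n‖ * ρ₀ ^ n
      ≤ (∑ k ∈ Finset.range (n + 1), ∑ j ∈ Finset.range (k + 1),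
          ‖(w₂ ^ j - w₁ ^ j) * (w₃ ^ (k - j) - w₁ ^ (k - j)) * (w₃ ^ (n - k) - w₂ ^ (n - k)) *
            (b j * b (k - j) * b (n - k))‖) * ρ₀ ^ n := by
        apply mul_le_mul_of_nonneg_right _ (by positivity)
        exact (norm_sum_le _ _).trans (Finset.sum_le_sum fun k _ => norm_sum_le _ _)
    _ = ∑ k ∈ Finset.range (n + 1), ∑ j ∈ Finset.range (k + 1),
          ‖(w₂ ^ j - w₁ ^ j) * (w₃ ^ (k - j) - w₁ ^ (k - j)) * (w₃ ^ (n - k) - w₂ ^ (n - k)) *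
            (b j * b (k - j) * b (n - k))‖ * ρ₀ ^ n := by
        rw [Finset.sum_mul]
        exact Finset.sum_congr rfl fun k _ => Finset.sum_mul _ _ _
    _ ≤ ∑ k ∈ Finset.range (n + 1), ∑ j ∈ Finset.range (k + 1), (8 * M ^ 3) :=
        Finset.sum_le_sum fun k hk => Finset.sum_le_sum fun j hj => hterm k hk j hj
    _ ≤ 8 * M ^ 3 * ((n : ℝ) + 1) ^ 2 := by
        simp only [Finset.sum_const, Finset.card_range, nsmul_eq_mul]
        push_cast
        calc ∑ k ∈ Finset.range (n + 1), ((k : ℝ) + 1) * (8 * M ^ 3)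
            ≤ ∑ k ∈ Finset.range (n + 1), ((n : ℝ) + 1) * (8 * M ^ 3) := by
              apply Finset.sum_le_sum
              intro k hk
              rw [Finset.mem_range, Nat.lt_succ_iff] at hk
              apply mul_le_mul_of_nonneg_right _ (by positivity)
              exact_mod_cast Nat.add_le_add_right hk 1
          _ = 8 * M ^ 3 * ((n : ℝ) + 1) ^ 2 := by
              simp only [Finset.sum_const, Finset.card_range, nsmul_eq_mul]
              push_cast
              ring

lemma sq_geom_summable {x : ℝ} (hx0 : 0 ≤ x) (hx1 : x < 1) :
    Summable fun n : ℕ => ((n : ℝ) + 1) ^ 2 * x ^ n := by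
  have h2 := summable_pow_mul_geometric_of_norm_lt_one (R := ℝ) 2 (by rwa [Real.norm_eq_abs, abs_of_nonneg hx0])
  have h1 := summable_pow_mul_geometric_of_norm_lt_one (R := ℝ) 1 (by rwa [Real.norm_eq_abs, abs_of_nonneg hx0])
  have h0 := summable_geometric_of_lt_one hx0 hx1
  have := (h2.add ((h1.mul_left 2).add h0))
  apply this.congr
  intro n
  push_cast
  ring

lemma ghat_summable (a : ℕ → ℍ)
    (hconv : ∀ ρ : ℝ, 0 ≤ ρ → ρ < 1 → Summable fun n : ℕ => ‖a n‖ * ρ ^ n)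
    (w₁ w₂ w₃ : ℍ) (h₁ : ‖w₁‖ ≤ 1) (h₂ : ‖w₂‖ ≤ 1) (h₃ : ‖w₃‖ ≤ 1) :
    ∀ s : ℝ, 0 ≤ s → s < 1 →
      Summable fun n : ℕ => ‖ghatCoeff (bseq a) w₁ w₂ w₃ n‖ * s ^ n := by
  intro s hs0 hs1
  set ρ₀ : ℝ := (1 + s) / 2 with hρ₀def
  have hρ₀0 : 0 < ρ₀ := by positivity
  have hsρ₀ : s < ρ₀ := by rw [hρ₀def]; linarith
  have hρ₀1 : ρ₀ < 1 := by rw [hρ₀def]; linarith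
  obtain ⟨M, hM⟩ : ∃ M : ℝ, ∀ m : ℕ, ‖a m‖ * ρ₀ ^ m ≤ M := by
    obtain ⟨M, hM⟩ := ((hconv ρ₀ hρ₀0.le hρ₀1).tendsto_atTop_zero).bddAbove_range
    exact ⟨M, fun m => hM ⟨m, rfl⟩⟩
  have hMb : ∀ m : ℕ, ‖bseq a m‖ * ρ₀ ^ m ≤ M := fun m =>
    le_trans (mul_le_mul_of_nonneg_right (norm_bseq_le a m) (by positivity)) (hM m)
  have hcomp := (sq_geom_summable (x := s / ρ₀) (by positivity)
    ((div_lt_one hρ₀0).2 hsρ₀)).mul_left (8 * M ^ 3)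
  apply Summable.of_nonneg_of_le (fun n => by positivity) _ hcomp
  intro n
  have hb := ghatCoeff_bound (bseq a) w₁ w₂ w₃ h₁ h₂ h₃ ρ₀ M hρ₀0.le hMb n
  have hsplit' : ∀ t u : ℝ, u ≠ 0 → t ^ n = u ^ n * (t / u) ^ n := by
    intro t u hu
    rw [div_pow]; field_simp
  have hsplit : s ^ n = ρ₀ ^ n * (s / ρ₀) ^ n := hsplit' s ρ₀ hρ₀0.ne'
  calc ‖ghatCoeff (bseq a) w₁ w₂ w₃ n‖ * s ^ n
      = (‖ghatCoeff (bseq a) w₁ w₂ w₃ n‖ * ρ₀ ^ n) * (s / ρ₀) ^ n := by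
        rw [hsplit]; ring
    _ ≤ (8 * M ^ 3 * ((n : ℝ) + 1) ^ 2) * (s / ρ₀) ^ n :=
        mul_le_mul_of_nonneg_right hb (by positivity)
    _ = 8 * M ^ 3 * (((n : ℝ) + 1) ^ 2 * (s / ρ₀) ^ n) := by ring

lemma hI0 : ((⟨0,1,0,0⟩ : ℍ) : ℍ) ^ 2 = -1 := by
  rw [sq, QuaternionAlgebra.ext_iff]
  simp [Quaternion.re_mul, Quaternion.imI_mul, Quaternion.imJ_mul, Quaternion.imK_mul]

lemma ghatCoeff_three (b : ℕ → ℍ) (w₁ w₂ w₃ : ℍ) :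
    ghatCoeff b w₁ w₂ w₃ 3 = (w₂ - w₁) * (w₃ - w₁) * (w₃ - w₂) * (b 1 * b 1 * b 1) := by
  show (∑ k ∈ Finset.range 4, ∑ j ∈ Finset.range (k + 1),
    (w₂ ^ j - w₁ ^ j) * (w₃ ^ (k - j) - w₁ ^ (k - j)) * (w₃ ^ (3 - k) - w₂ ^ (3 - k)) *
      (b j * b (k - j) * b (3 - k))) = _
  simp only [Finset.sum_range_succ, Finset.sum_range_zero]
  norm_num [sub_self, pow_one]

set_option maxHeartbeats 1000000 in
lemma key_max (I : ℍ) (hI : I ^ 2 = -1) (c : ℕ → ℍ)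
    (hc0 : c 0 = 0) (hc1 : c 1 = 0) (hc2 : c 2 = 0)
    (hsum : ∀ s : ℝ, 0 ≤ s → s < 1 → Summable fun n => ‖c n‖ * s ^ n)
    {z : ℍ} (hz : z ∈ sliceL I) {r ρ : ℝ}
    (hzr : ‖z‖ ≤ r) (h0r : 0 < r) (hrρ : r ≤ ρ) (hρ1 : ρ < 1) :
    ∃ z', z' ∈ sliceL I ∧ ‖z'‖ ≤ ρ ∧
      ‖∑' n : ℕ, z ^ n * c n‖ ≤ (r / ρ) ^ 3 * ‖∑' n : ℕ, z' ^ n * c n‖ := by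
  have hI' : I * I = -1 := by rw [← sq]; exact hI
  set φ := Complex.liftAux I hI' with hφ
  have hρ0 : 0 < ρ := lt_of_lt_of_le h0r hrρ
  -- complex module structure on ℍ via φ
  letI : Module ℂ ℍ := Module.compHom (Quaternion ℝ) (φ.toRingHom)
  have hsmul : ∀ (w : ℂ) (q : ℍ), w • q = φ w * q := fun _ _ => rfl
  letI : NormedSpace ℂ ℍ :=
    { norm_smul_le := fun w q => by
        rw [hsmul, norm_mul, norm_phi I hI hI' w] }
  -- the power series of H(w) = ∑ wⁿ • c (n+3)
  set p : FormalMultilinearSeries ℂ ℂ ℍ :=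
    fun n => ContinuousMultilinearMap.mkPiRing ℂ (Fin n) (c (n + 3)) with hp
  have hpnorm : ∀ n, ‖p n‖ = ‖c (n + 3)‖ := by
    intro n; rw [hp]; exact ContinuousMultilinearMap.norm_mkPiRing _
  have hpsum : ∀ w : ℂ, p.sum w = ∑' n : ℕ, φ w ^ n * c (n + 3) := by
    intro w
    rw [FormalMultilinearSeries.sum]
    congr 1
    funext n
    rw [hp]
    rw [ContinuousMultilinearMap.mkPiRing_apply, Finset.prod_const, Finset.card_univ,
      Fintype.card_fin, hsmul, map_pow]
  set ρ' : ℝ := (1 + ρ) / 2 with hρ'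
  have hρ'0 : 0 < ρ' := by positivity
  have hρρ' : ρ < ρ' := by rw [hρ']; linarith
  have hρ'1 : ρ' < 1 := by rw [hρ']; linarith
  -- radius bound
  have hrad : (ρ'.toNNReal : ENNReal) ≤ p.radius := by
    apply FormalMultilinearSeries.le_radius_of_summable
    have hs : Summable fun n => ‖c n‖ * ρ' ^ n := hsum ρ' hρ'0.le hρ'1
    have hs3 : Summable fun n => ‖c (n + 3)‖ * ρ' ^ (n + 3) := (summable_nat_add_iff 3).2 hs
    have hs4 : Summable fun n => (‖c (n + 3)‖ * ρ' ^ (n + 3)) * (ρ' ^ 3)⁻¹ := hs3.mul_right _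
    apply Summable.congr hs4
    intro n
    rw [hpnorm n, Real.coe_toNNReal _ hρ'0.le]
    field_simp
    ring
  have hradpos : (0 : ENNReal) < p.radius :=
    lt_of_lt_of_le (by simp [Real.toNNReal_pos.2 hρ'0]) hrad
  have hball := p.hasFPowerSeriesOnBall hradpos
  have hsub : closedBall (0 : ℂ) ρ ⊆ EMetric.ball (0 : ℂ) p.radius := by
    intro w hw
    change edist w 0 < p.radius
    rw [edist_zero_right]
    calc (‖w‖₊ : ENNReal) ≤ (ρ.toNNReal : ENNReal) := by
          rw [ENNReal.coe_le_coe, ← NNReal.coe_le_coe, coe_nnnorm,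
            Real.coe_toNNReal _ hρ0.le]
          simpa [Metric.mem_closedBall, dist_zero_right] using hw
      _ < (ρ'.toNNReal : ENNReal) := by
          rw [ENNReal.coe_lt_coe, ← NNReal.coe_lt_coe,
            Real.coe_toNNReal _ hρ0.le, Real.coe_toNNReal _ hρ'0.le]
          exact hρρ'
      _ ≤ p.radius := hrad
  have hdiff : DifferentiableOn ℂ p.sum (closedBall (0 : ℂ) ρ) :=
    (hball.analyticOnNhd.differentiableOn).mono hsub
  have hdc : DiffContOnCl ℂ p.sum (ball (0 : ℂ) ρ) := by
    apply DifferentiableOn.diffContOnCl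
    rwa [closure_ball (0 : ℂ) hρ0.ne']
  -- maximum on the sphere
  obtain ⟨w', hw'mem, hw'max⟩ :=
    (isCompact_sphere (0 : ℂ) ρ).exists_isMaxOn
      (NormedSpace.sphere_nonempty.2 hρ0.le)
      ((hdiff.continuousOn.comp continuousOn_id (fun u hu => sphere_subset_closedBall hu)).norm)
  have hbd : ∀ u : ℂ, ‖u‖ ≤ ρ → ‖p.sum u‖ ≤ ‖p.sum w'‖ := by
    intro u hu
    apply Complex.norm_le_of_forall_mem_frontier_norm_le isBounded_ball hdc
    · intro v hv
      rw [frontier_ball (0 : ℂ) hρ0.ne'] at hv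
      exact hw'max hv
    · rw [closure_ball (0 : ℂ) hρ0.ne']
      simpa [Metric.mem_closedBall, dist_zero_right] using hu
  -- express the tails
  have hgsum : ∀ u : ℍ, ‖u‖ ≤ ρ → Summable fun n : ℕ => u ^ n * c n := by
    intro u hu
    apply Summable.of_norm
    apply Summable.of_nonneg_of_le (fun n => norm_nonneg _) _ (hsum ρ hρ0.le hρ1)
    intro n
    rw [norm_mul, norm_pow, mul_comm]
    exact mul_le_mul_of_nonneg_left (pow_le_pow_left₀ (norm_nonneg _) hu n) (norm_nonneg _)
  have key_eq : ∀ w : ℂ, ‖φ w‖ ≤ ρ → ∑' n : ℕ, (φ w) ^ n * c n = (φ w) ^ 3 * p.sum w := by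
    intro w hw
    have hsummable := hgsum (φ w) hw
    rw [← Summable.sum_add_tsum_nat_add 3 hsummable]
    have h0 : (∑ i ∈ Finset.range 3, (φ w) ^ i * c i) = 0 := by
      rw [Finset.sum_range_succ, Finset.sum_range_succ, Finset.sum_range_one,
        hc0, hc1, hc2, mul_zero, mul_zero, mul_zero, add_zero, add_zero]
    rw [h0, zero_add, hpsum w, ← tsum_mul_left]
    congr 1
    funext n
    rw [show n + 3 = 3 + n from add_comm n 3, pow_add, mul_assoc]
  -- put it together
  rw [mem_sliceL_iff I hI'] at hz
  obtain ⟨w, rfl⟩ := hz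
  refine ⟨φ w', (mem_sliceL_iff I hI' _).2 ⟨w', rfl⟩, ?_, ?_⟩
  · rw [norm_phi I hI hI' w']
    rw [mem_sphere_zero_iff_norm] at hw'mem
    rw [hw'mem]
  · have hwρ : ‖φ w‖ ≤ ρ := le_trans hzr hrρ
    have hw'ρ : ‖φ w'‖ ≤ ρ := by
      rw [norm_phi I hI hI' w', mem_sphere_zero_iff_norm.1 hw'mem]
    rw [key_eq w hwρ, key_eq w' hw'ρ, norm_mul, norm_mul, norm_pow, norm_pow]
    have h1 : ‖p.sum w‖ ≤ ‖p.sum w'‖ := by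
      apply hbd
      rw [← norm_phi I hI hI' w]
      exact hwρ
    have h2 : ‖φ w'‖ = ρ := by
      rw [norm_phi I hI hI' w', mem_sphere_zero_iff_norm.1 hw'mem]
    rw [h2]
    have h3 : ‖φ w‖ ^ 3 ≤ r ^ 3 := pow_le_pow_left₀ (norm_nonneg _) hzr 3
    calc ‖φ w‖ ^ 3 * ‖p.sum w‖ ≤ r ^ 3 * ‖p.sum w'‖ :=
          mul_le_mul h3 h1 (norm_nonneg _) (by positivity)
      _ = (r / ρ) ^ 3 * (ρ ^ 3 * ‖p.sum w'‖) := by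
          field_simp

-- BEGIN PART D
def S3 (a : ℕ → ℍ) (r : ℝ) : Set ℝ :=
  {x : ℝ | ∃ I w₁ w₂ w₃ z : ℍ, I ^ 2 = -1 ∧
    w₁ ∈ sliceL I ∧ ‖w₁‖ ≤ 1 ∧ w₂ ∈ sliceL I ∧ ‖w₂‖ ≤ 1 ∧ w₃ ∈ sliceL I ∧ ‖w₃‖ ≤ 1 ∧
    z ∈ sliceL I ∧ ‖z‖ ≤ r ∧
    x = ‖∑' n : ℕ, z ^ n * ghatCoeff (bseq a) w₁ w₂ w₃ n‖ ^ ((1 : ℝ) / 3)}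

lemma sliceD3_eq (a : ℕ → ℍ) (r : ℝ) : sliceD3 a r = sSup (S3 a r) := rfl

lemma S3_nonneg (a : ℕ → ℍ) (r : ℝ) : ∀ x ∈ S3 a r, 0 ≤ x := by
  rintro x ⟨I, w₁, w₂, w₃, z, hI, _, _, _, _, _, _, _, _, hx⟩
  rw [hx]
  exact Real.rpow_nonneg (norm_nonneg _) _

lemma sliceD3_nonneg (a : ℕ → ℍ) (r : ℝ) : 0 ≤ sliceD3 a r :=
  Real.sSup_nonneg (S3_nonneg a r)

lemma tsum_ghat_summable (a : ℕ → ℍ)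
    (hconv : ∀ ρ : ℝ, 0 ≤ ρ → ρ < 1 → Summable fun n : ℕ => ‖a n‖ * ρ ^ n)
    (w₁ w₂ w₃ : ℍ) (h₁ : ‖w₁‖ ≤ 1) (h₂ : ‖w₂‖ ≤ 1) (h₃ : ‖w₃‖ ≤ 1)
    {z : ℍ} {ρ : ℝ} (hz : ‖z‖ ≤ ρ) (hρ0 : 0 ≤ ρ) (hρ1 : ρ < 1) :
    Summable fun n : ℕ => ‖z ^ n * ghatCoeff (bseq a) w₁ w₂ w₃ n‖ := by
  apply Summable.of_nonneg_of_le (fun n => norm_nonneg _) _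
    (ghat_summable a hconv w₁ w₂ w₃ h₁ h₂ h₃ ρ hρ0 hρ1)
  intro n
  rw [norm_mul, norm_pow, mul_comm]
  exact mul_le_mul_of_nonneg_left (pow_le_pow_left₀ (norm_nonneg _) hz n) (norm_nonneg _)

lemma exists_uniform_bound (a : ℕ → ℍ)
    (hconv : ∀ ρ : ℝ, 0 ≤ ρ → ρ < 1 → Summable fun n : ℕ => ‖a n‖ * ρ ^ n)
    {ρ : ℝ} (hρ0 : 0 ≤ ρ) (hρ1 : ρ < 1) :
    ∃ C : ℝ, ∀ w₁ w₂ w₃ z : ℍ, ‖w₁‖ ≤ 1 → ‖w₂‖ ≤ 1 → ‖w₃‖ ≤ 1 → ‖z‖ ≤ ρ →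
      ‖∑' n : ℕ, z ^ n * ghatCoeff (bseq a) w₁ w₂ w₃ n‖ ≤ C := by
  set ρ₀ : ℝ := (1 + ρ) / 2 with hρ₀def
  have hρ₀0 : 0 < ρ₀ := by positivity
  have hsρ₀ : ρ < ρ₀ := by rw [hρ₀def]; linarith
  have hρ₀1 : ρ₀ < 1 := by rw [hρ₀def]; linarith
  obtain ⟨M, hM⟩ : ∃ M : ℝ, ∀ m : ℕ, ‖a m‖ * ρ₀ ^ m ≤ M := by
    obtain ⟨M, hM⟩ := ((hconv ρ₀ hρ₀0.le hρ₀1).tendsto_atTop_zero).bddAbove_range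
    exact ⟨M, fun m => hM ⟨m, rfl⟩⟩
  have hMb : ∀ m : ℕ, ‖bseq a m‖ * ρ₀ ^ m ≤ M := fun m =>
    le_trans (mul_le_mul_of_nonneg_right (norm_bseq_le a m) (by positivity)) (hM m)
  have hcomp := (sq_geom_summable (x := ρ / ρ₀) (by positivity)
    ((div_lt_one hρ₀0).2 hsρ₀)).mul_left (8 * M ^ 3)
  refine ⟨∑' n : ℕ, 8 * M ^ 3 * (((n : ℝ) + 1) ^ 2 * (ρ / ρ₀) ^ n), ?_⟩
  intro w₁ w₂ w₃ z h₁ h₂ h₃ hz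
  have hsum1 := tsum_ghat_summable a hconv w₁ w₂ w₃ h₁ h₂ h₃ hz hρ0 hρ1
  calc ‖∑' n : ℕ, z ^ n * ghatCoeff (bseq a) w₁ w₂ w₃ n‖
      ≤ ∑' n : ℕ, ‖z ^ n * ghatCoeff (bseq a) w₁ w₂ w₃ n‖ := norm_tsum_le_tsum_norm hsum1
    _ ≤ ∑' n : ℕ, 8 * M ^ 3 * (((n : ℝ) + 1) ^ 2 * (ρ / ρ₀) ^ n) := by
        apply Summable.tsum_le_tsum _ hsum1 hcomp
        intro n
        have hb := ghatCoeff_bound (bseq a) w₁ w₂ w₃ h₁ h₂ h₃ ρ₀ M hρ₀0.le hMb n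
        have hsplit : ∀ t u : ℝ, u ≠ 0 → 0 ≤ t → t ^ n = u ^ n * (t / u) ^ n := by
          intro t u hu _
          rw [div_pow]; field_simp
        calc ‖z ^ n * ghatCoeff (bseq a) w₁ w₂ w₃ n‖
            ≤ ‖ghatCoeff (bseq a) w₁ w₂ w₃ n‖ * ρ ^ n := by
              rw [norm_mul, norm_pow, mul_comm]
              exact mul_le_mul_of_nonneg_left (pow_le_pow_left₀ (norm_nonneg _) hz n)
                (norm_nonneg _)
          _ = (‖ghatCoeff (bseq a) w₁ w₂ w₃ n‖ * ρ₀ ^ n) * (ρ / ρ₀) ^ n := by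
              rw [hsplit ρ ρ₀ hρ₀0.ne' hρ0]; ring
          _ ≤ (8 * M ^ 3 * ((n : ℝ) + 1) ^ 2) * (ρ / ρ₀) ^ n :=
              mul_le_mul_of_nonneg_right hb (by positivity)
          _ = 8 * M ^ 3 * (((n : ℝ) + 1) ^ 2 * (ρ / ρ₀) ^ n) := by ring

lemma bddAbove_S3 (a : ℕ → ℍ)
    (hconv : ∀ ρ : ℝ, 0 ≤ ρ → ρ < 1 → Summable fun n : ℕ => ‖a n‖ * ρ ^ n)
    {ρ : ℝ} (hρ0 : 0 ≤ ρ) (hρ1 : ρ < 1) : BddAbove (S3 a ρ) := by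
  obtain ⟨C, hC⟩ := exists_uniform_bound a hconv hρ0 hρ1
  refine ⟨C ^ ((1 : ℝ) / 3), ?_⟩
  rintro x ⟨I, w₁, w₂, w₃, z, hI, _, h₁, _, h₂, _, h₃, _, hz, hx⟩
  rw [hx]
  exact Real.rpow_le_rpow (norm_nonneg _) (hC w₁ w₂ w₃ z h₁ h₂ h₃ hz) (by norm_num)

lemma sliceD3_mono_div (a : ℕ → ℍ)
    (hconv : ∀ ρ : ℝ, 0 ≤ ρ → ρ < 1 → Summable fun n : ℕ => ‖a n‖ * ρ ^ n)
    {r ρ : ℝ} (h0r : 0 < r) (hrρ : r ≤ ρ) (hρ1 : ρ < 1) :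
    sliceD3 a r ≤ (r / ρ) * sliceD3 a ρ := by
  have hρ0 : 0 < ρ := lt_of_lt_of_le h0r hrρ
  rw [sliceD3_eq, sliceD3_eq]
  apply Real.sSup_le
  · rintro x ⟨I, w₁, w₂, w₃, z, hI, hw₁, h₁, hw₂, h₂, hw₃, h₃, hz, hzr, hx⟩
    obtain ⟨z', hz', hz'ρ, hle⟩ := key_max I hI (ghatCoeff (bseq a) w₁ w₂ w₃)
      (ghatCoeff_zero _ _ _ _ 0 (by norm_num)) (ghatCoeff_zero _ _ _ _ 1 (by norm_num))
      (ghatCoeff_zero _ _ _ _ 2 (by norm_num))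
      (ghat_summable a hconv w₁ w₂ w₃ h₁ h₂ h₃) hz hzr h0r hrρ hρ1
    have hmem : ‖∑' n : ℕ, z' ^ n * ghatCoeff (bseq a) w₁ w₂ w₃ n‖ ^ ((1 : ℝ) / 3) ∈ S3 a ρ :=
      ⟨I, w₁, w₂, w₃, z', hI, hw₁, h₁, hw₂, h₂, hw₃, h₃, hz', hz'ρ, rfl⟩
    have hle2 : ‖∑' n : ℕ, z' ^ n * ghatCoeff (bseq a) w₁ w₂ w₃ n‖ ^ ((1 : ℝ) / 3)
        ≤ sSup (S3 a ρ) := le_csSup (bddAbove_S3 a hconv hρ0.le hρ1) hmem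
    rw [hx]
    calc ‖∑' n : ℕ, z ^ n * ghatCoeff (bseq a) w₁ w₂ w₃ n‖ ^ ((1 : ℝ) / 3)
        ≤ ((r / ρ) ^ 3 * ‖∑' n : ℕ, z' ^ n * ghatCoeff (bseq a) w₁ w₂ w₃ n‖) ^ ((1 : ℝ) / 3) :=
          Real.rpow_le_rpow (norm_nonneg _) hle (by norm_num)
      _ = (r / ρ) * ‖∑' n : ℕ, z' ^ n * ghatCoeff (bseq a) w₁ w₂ w₃ n‖ ^ ((1 : ℝ) / 3) := by
          rw [Real.mul_rpow (by positivity) (norm_nonneg _)]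
          congr 1
          rw [← Real.rpow_natCast (r / ρ) 3, ← Real.rpow_mul (by positivity)]
          norm_num
      _ ≤ (r / ρ) * sSup (S3 a ρ) :=
          mul_le_mul_of_nonneg_left hle2 (by positivity)
  · have := sliceD3_nonneg a ρ
    rw [sliceD3_eq] at this
    positivity

lemma part1 (a : ℕ → ℍ)
    (hconv : ∀ ρ : ℝ, 0 ≤ ρ → ρ < 1 → Summable fun n : ℕ => ‖a n‖ * ρ ^ n)
    (hd : Tendsto (sliceD3 a) (nhdsWithin 1 (Set.Iio 1)) (nhds (Real.sqrt 3))) :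
    ∀ r ∈ Set.Ioo (0 : ℝ) 1, sliceD3 a r ≤ Real.sqrt 3 * r := by
  rintro r ⟨h0r, hr1⟩
  have htend : Tendsto (fun ρ : ℝ => (r / ρ) * sliceD3 a ρ) (nhdsWithin 1 (Set.Iio 1))
      (nhds (Real.sqrt 3 * r)) := by
    have h1 : Tendsto (fun ρ : ℝ => r / ρ) (nhdsWithin 1 (Set.Iio 1)) (nhds r) := by
      have : Tendsto (fun ρ : ℝ => r / ρ) (nhds 1) (nhds (r / 1)) :=
        (tendsto_const_nhds.div tendsto_id one_ne_zero)
      rw [div_one] at this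
      exact this.mono_left nhdsWithin_le_nhds
    have := h1.mul hd
    rwa [mul_comm r (Real.sqrt 3)] at this
  apply ge_of_tendsto htend
  have hmem : Set.Ioo r 1 ∈ nhdsWithin (1 : ℝ) (Set.Iio 1) :=
    Ioo_mem_nhdsLT_of_mem ⟨hr1, le_refl 1⟩
  filter_upwards [hmem] with ρ hρ
  exact sliceD3_mono_div a hconv h0r hρ.1.le hρ.2


set_option maxHeartbeats 2000000 in
/-- Landau–Toeplitz theorem for the slice `3`-diameter, inequality part. -/
theorem landau_toeplitz_sliceD3_ineq (a : ℕ → ℍ)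
    (hconv : ∀ ρ : ℝ, 0 ≤ ρ → ρ < 1 → Summable fun n : ℕ => ‖a n‖ * ρ ^ n)
    (hd : Tendsto (sliceD3 a) (nhdsWithin 1 (Set.Iio 1)) (nhds (Real.sqrt 3))) :
    (∀ r ∈ Set.Ioo (0 : ℝ) 1, sliceD3 a r ≤ Real.sqrt 3 * r) ∧ ‖a 1‖ ≤ 1 := by
  have hP1 : ∀ r ∈ Set.Ioo (0 : ℝ) 1, sliceD3 a r ≤ Real.sqrt 3 * r := part1 a hconv hd
  refine ⟨hP1, ?_⟩
  by_cases hA : ∃ N, a N ≠ 0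
  swap
  · push_neg at hA
    rw [hA 1]
    simp
  -- setup
  set I₀ : ℍ := ⟨0, 1, 0, 0⟩ with hI₀def
  have hI₀ : I₀ ^ 2 = -1 := hI0
  set s3 : ℝ := Real.sqrt 3 with hs3def
  have hs30 : 0 < s3 := Real.sqrt_pos.2 (by norm_num)
  have hs3sq : s3 ^ 2 = 3 := Real.sq_sqrt (by norm_num)
  set w₁ : ℍ := ((1 : ℝ) : ℍ) with hw₁def
  set w₂ : ℍ := ((-1/2 : ℝ) : ℍ) + (s3 / 2) • I₀ with hw₂def
  set w₃ : ℍ := ((-1/2 : ℝ) : ℍ) + (-(s3 / 2)) • I₀ with hw₃def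
  have hmem₁ : w₁ ∈ sliceL I₀ := ⟨1, 0, by rw [hw₁def]; simp⟩
  have hmem₂ : w₂ ∈ sliceL I₀ := ⟨-1/2, s3 / 2, rfl⟩
  have hmem₃ : w₃ ∈ sliceL I₀ := ⟨-1/2, -(s3 / 2), rfl⟩
  have hsq34 : (s3 / 2) ^ 2 = 3 / 4 := by rw [div_pow, hs3sq]; norm_num
  have hn₁ : ‖w₁‖ = 1 := by rw [hw₁def, Quaternion.norm_coe]; norm_num
  have hn₂ : ‖w₂‖ = 1 := by
    rw [hw₂def, norm_slice_pt I₀ hI₀]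
    rw [show (-1/2 : ℝ) ^ 2 + (s3 / 2) ^ 2 = 1 by rw [hsq34]; norm_num]
    exact Real.sqrt_one
  have hn₃ : ‖w₃‖ = 1 := by
    rw [hw₃def, norm_slice_pt I₀ hI₀]
    rw [show (-1/2 : ℝ) ^ 2 + (-(s3 / 2)) ^ 2 = 1 by rw [neg_pow, hsq34]; norm_num]
    exact Real.sqrt_one
  -- the differences
  have h21 : w₂ - w₁ = ((-3/2 : ℝ) : ℍ) + (s3 / 2) • I₀ := by
    rw [show ((-3/2 : ℝ) : ℍ) = ((-1/2 : ℝ) : ℍ) - ((1 : ℝ) : ℍ) by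
      rw [← Quaternion.coe_sub]; norm_num]
    rw [hw₂def, hw₁def]
    abel
  have h31 : w₃ - w₁ = ((-3/2 : ℝ) : ℍ) + (-(s3 / 2)) • I₀ := by
    rw [show ((-3/2 : ℝ) : ℍ) = ((-1/2 : ℝ) : ℍ) - ((1 : ℝ) : ℍ) by
      rw [← Quaternion.coe_sub]; norm_num]
    rw [hw₃def, hw₁def]
    abel
  have h32 : w₃ - w₂ = ((0 : ℝ) : ℍ) + (-s3) • I₀ := by
    rw [hw₃def, hw₂def, show ((0 : ℝ) : ℍ) = ((-1/2 : ℝ) : ℍ) - ((-1/2 : ℝ) : ℍ) by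
      rw [sub_self]; exact (Quaternion.coe_zero).symm]
    rw [show (-s3 : ℝ) = (-(s3 / 2)) - s3 / 2 by ring, sub_smul]
    abel
  have hn21 : ‖w₂ - w₁‖ = s3 := by
    rw [h21, norm_slice_pt I₀ hI₀,
      show (-3/2 : ℝ) ^ 2 + (s3 / 2) ^ 2 = 3 by rw [hsq34]; norm_num]
  have hn31 : ‖w₃ - w₁‖ = s3 := by
    rw [h31, norm_slice_pt I₀ hI₀,
      show (-3/2 : ℝ) ^ 2 + (-(s3 / 2)) ^ 2 = 3 by rw [neg_pow, hsq34]; norm_num]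
  have hn32 : ‖w₃ - w₂‖ = s3 := by
    rw [h32, norm_slice_pt I₀ hI₀,
      show (0 : ℝ) ^ 2 + (-s3) ^ 2 = 3 by rw [neg_pow, hs3sq]; norm_num]
  set c : ℕ → ℍ := ghatCoeff (bseq a) w₁ w₂ w₃ with hcdef
  have hc3 : ‖c 3‖ = s3 ^ 3 * ‖a 1‖ ^ 3 := by
    simp only [hcdef, ghatCoeff_three, norm_mul, hn21, hn31, hn32, norm_bseq_eq a hA 1]
    ring
  -- tail bound
  have hn₁' : ‖w₁‖ ≤ 1 := le_of_eq hn₁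
  have hn₂' : ‖w₂‖ ≤ 1 := le_of_eq hn₂
  have hn₃' : ‖w₃‖ ≤ 1 := le_of_eq hn₃
  have hT : Summable fun n : ℕ => ‖c n‖ * (1/2 : ℝ) ^ n :=
    ghat_summable a hconv w₁ w₂ w₃ hn₁' hn₂' hn₃' (1/2) (by norm_num) (by norm_num)
  have hT4 : Summable fun n : ℕ => ‖c (n + 4)‖ * (1/2 : ℝ) ^ (n + 4) :=
    (summable_nat_add_iff 4).2 hT
  set D : ℝ := ∑' n : ℕ, ‖c (n + 4)‖ * (1/2 : ℝ) ^ (n + 4) with hDdef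
  have hD0 : 0 ≤ D := tsum_nonneg fun n => by positivity
  -- main estimate for each small r
  have hmain : ∀ r : ℝ, 0 < r → r ≤ 1/2 → s3 ^ 3 * ‖a 1‖ ^ 3 ≤ s3 ^ 3 + 16 * r * D := by
    intro r h0r hr2
    have hr1 : r < 1 := lt_of_le_of_lt hr2 (by norm_num)
    set z : ℍ := ((r : ℝ) : ℍ) with hzdef
    have hmemz : z ∈ sliceL I₀ := ⟨r, 0, by rw [hzdef]; simp⟩
    have hnz : ‖z‖ = r := by rw [hzdef, Quaternion.norm_coe, Real.norm_eq_abs, abs_of_pos h0r]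
    have hnzr : ‖z‖ ≤ r := le_of_eq hnz
    have hzsum : Summable fun n : ℕ => ‖z ^ n * c n‖ :=
      tsum_ghat_summable a hconv w₁ w₂ w₃ hn₁' hn₂' hn₃' (ρ := 1/2)
        (by rw [hnz]; exact hr2) (by norm_num) (by norm_num)
    have hzsum' : Summable fun n : ℕ => z ^ n * c n := hzsum.of_norm
    -- decomposition
    have hdecomp : (∑' n : ℕ, z ^ n * c n) =
        z ^ 3 * c 3 + ∑' n : ℕ, z ^ (n + 4) * c (n + 4) := by
      rw [← Summable.sum_add_tsum_nat_add 4 hzsum']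
      congr 1
      rw [Finset.sum_range_succ, Finset.sum_range_succ, Finset.sum_range_succ,
        Finset.sum_range_one]
      rw [hcdef, ghatCoeff_zero _ _ _ _ 0 (by norm_num), ghatCoeff_zero _ _ _ _ 1 (by norm_num),
        ghatCoeff_zero _ _ _ _ 2 (by norm_num)]
      simp
    -- tail estimate
    have htail : ‖∑' n : ℕ, z ^ (n + 4) * c (n + 4)‖ ≤ 16 * r ^ 4 * D := by
      have hsumtail : Summable fun n : ℕ => ‖z ^ (n + 4) * c (n + 4)‖ :=
        (summable_nat_add_iff 4).2 hzsum
      calc ‖∑' n : ℕ, z ^ (n + 4) * c (n + 4)‖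
          ≤ ∑' n : ℕ, ‖z ^ (n + 4) * c (n + 4)‖ := norm_tsum_le_tsum_norm hsumtail
        _ ≤ ∑' n : ℕ, 16 * r ^ 4 * (‖c (n + 4)‖ * (1/2 : ℝ) ^ (n + 4)) := by
            apply Summable.tsum_le_tsum _ hsumtail (hT4.mul_left _)
            intro n
            rw [norm_mul, norm_pow, hnz]
            have h1 : r ^ (n + 4) ≤ r ^ 4 * (1/2 : ℝ) ^ n := by
              rw [show n + 4 = 4 + n from add_comm n 4, pow_add]
              exact mul_le_mul_of_nonneg_left (pow_le_pow_left₀ h0r.le hr2 n) (by positivity)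
            calc r ^ (n + 4) * ‖c (n + 4)‖ ≤ (r ^ 4 * (1/2 : ℝ) ^ n) * ‖c (n + 4)‖ :=
                  mul_le_mul_of_nonneg_right h1 (norm_nonneg _)
              _ = 16 * r ^ 4 * (‖c (n + 4)‖ * (1/2 : ℝ) ^ (n + 4)) := by
                  rw [show n + 4 = 4 + n from add_comm n 4, pow_add]
                  norm_num
                  ring
        _ = 16 * r ^ 4 * D := by rw [hDdef, tsum_mul_left]
    -- whole sum estimate via part 1
    have hwhole : ‖∑' n : ℕ, z ^ n * c n‖ ≤ s3 ^ 3 * r ^ 3 := by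
      set x : ℝ := ‖∑' n : ℕ, z ^ n * c n‖ ^ ((1 : ℝ) / 3) with hxdef
      have hxmem : x ∈ S3 a r :=
        ⟨I₀, w₁, w₂, w₃, z, hI₀, hmem₁, hn₁', hmem₂, hn₂', hmem₃, hn₃', hmemz, hnzr, rfl⟩
      have hx1 : x ≤ s3 * r := by
        calc x ≤ sliceD3 a r := by
              rw [sliceD3_eq]
              exact le_csSup (bddAbove_S3 a hconv h0r.le hr1) hxmem
          _ ≤ s3 * r := hP1 r ⟨h0r, hr1⟩
      have hx0 : 0 ≤ x := Real.rpow_nonneg (norm_nonneg _) _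
      have hxcube : x ^ 3 = ‖∑' n : ℕ, z ^ n * c n‖ := by
        rw [hxdef, ← Real.rpow_natCast (‖∑' n : ℕ, z ^ n * c n‖ ^ ((1 : ℝ) / 3)) 3,
          ← Real.rpow_mul (norm_nonneg _)]
        norm_num
      calc ‖∑' n : ℕ, z ^ n * c n‖ = x ^ 3 := hxcube.symm
        _ ≤ (s3 * r) ^ 3 := pow_le_pow_left₀ hx0 hx1 3
        _ = s3 ^ 3 * r ^ 3 := by ring
    -- combine
    have hlow : s3 ^ 3 * ‖a 1‖ ^ 3 * r ^ 3 ≤ s3 ^ 3 * r ^ 3 + 16 * r ^ 4 * D := by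
      have h1 : ‖z ^ 3 * c 3‖ = s3 ^ 3 * ‖a 1‖ ^ 3 * r ^ 3 := by
        rw [norm_mul, norm_pow, hnz, hc3]
        ring
      have h2 : ‖z ^ 3 * c 3‖ ≤ ‖∑' n : ℕ, z ^ n * c n‖ + ‖∑' n : ℕ, z ^ (n + 4) * c (n + 4)‖ := by
        rw [hdecomp]
        exact norm_le_add_norm_add _ _
      rw [h1] at h2
      linarith [htail, hwhole]
    have hr3 : (0 : ℝ) < r ^ 3 := by positivity
    have := (mul_le_mul_iff_of_pos_right hr3).1 (by
      calc s3 ^ 3 * ‖a 1‖ ^ 3 * r ^ 3 ≤ s3 ^ 3 * r ^ 3 + 16 * r ^ 4 * D := hlow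
        _ = (s3 ^ 3 + 16 * r * D) * r ^ 3 := by ring)
    exact this
  -- let r → 0
  have hfin : s3 ^ 3 * ‖a 1‖ ^ 3 ≤ s3 ^ 3 := by
    apply le_of_forall_pos_le_add
    intro ε hε
    set r : ℝ := min (1/2) (ε / (16 * (D + 1))) with hrdef
    have hr0 : 0 < r := lt_min (by norm_num) (by positivity)
    have hr2 : r ≤ 1/2 := min_le_left _ _
    have hrD : 16 * r * D ≤ ε := by
      have hrε : r ≤ ε / (16 * (D + 1)) := min_le_right _ _
      have h16 : (0 : ℝ) < 16 * (D + 1) := by positivity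
      have := mul_le_mul_of_nonneg_left hrε (by positivity : (0:ℝ) ≤ 16 * D)
      calc 16 * r * D = (16 * D) * r := by ring
        _ ≤ (16 * D) * (ε / (16 * (D + 1))) := by
            exact mul_le_mul_of_nonneg_left hrε (by positivity)
        _ ≤ ε := by
            rw [mul_div_assoc']
            rw [div_le_iff₀ h16]
            nlinarith [hD0, hε.le]
    calc s3 ^ 3 * ‖a 1‖ ^ 3 ≤ s3 ^ 3 + 16 * r * D := hmain r hr0 hr2
      _ ≤ s3 ^ 3 + ε := by linarith
  have hcube : ‖a 1‖ ^ 3 ≤ 1 := by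
    have hs3c : (0 : ℝ) < s3 ^ 3 := by positivity
    nlinarith [hfin]
  exact (pow_le_one_iff_of_nonneg (norm_nonneg _) (by norm_num)).1 hcube
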